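/- Let O ⊆ X_A be clopen and η ∈ Γ_A satisfy η(O) ∩ O^c ≠ ∅ and η(O^c) ∩ O^c ≠ ∅. Then the subgroup of Γ_A generated by Γ_O, Γ_{O^c}, and η equals Γ_A. -/

import Mathlib

open Set

instance homeoGroup {α : Type*} [TopologicalSpace α] : Group (α ≃ₜ α) where
  mul a b := b.trans a
  one := Homeomorph.refl α
  inv := Homeomorph.symm
  mul_assoc _ _ _ := Homeomorph.ext fun _ => rfl
  one_mul _ := Homeomorph.ext fun _ => rfl
  mul_one _ := Homeomorph.ext fun _ => rfl
  inv_mul_cancel a := Homeomorph.ext fun x => a.symm_apply_apply x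

@[simp] theorem homeo_mul_apply {α : Type*} [TopologicalSpace α] (a b : α ≃ₜ α) (x : α) :
    (a * b) x = a (b x) := rfl

@[simp] theorem homeo_inv_apply {α : Type*} [TopologicalSpace α] (a : α ≃ₜ α) (x : α) :
    a⁻¹ x = a.symm x := rfl

/-- The one-sided shift space `X_A` of a 0-1 matrix `A`. -/
abbrev ShiftSpace {N : ℕ} (A : Fin N → Fin N → Bool) : Type :=
  {x : ℕ → Fin N // ∀ n, A (x n) (x (n + 1)) = true}

/-- The one-sided shift `σ_A`. -/
def shiftMap {N : ℕ} (A : Fin N → Fin N → Bool) (x : ShiftSpace A) : ShiftSpace A :=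
  ⟨fun n => x.1 (n + 1), fun n => x.2 (n + 1)⟩

/-- Irreducibility of the matrix `A`: any two indices are connected by a path. -/
def MatrixIrreducible {N : ℕ} (A : Fin N → Fin N → Bool) : Prop :=
  ∀ i j : Fin N, ∃ n : ℕ, 0 < n ∧ ∃ w : ℕ → Fin N, w 0 = i ∧ w n = j ∧
    ∀ k < n, A (w k) (w (k + 1)) = true

/-- Condition (I): the shift space is homeomorphic to the Cantor set. -/
def ConditionI {N : ℕ} (A : Fin N → Fin N → Bool) : Prop :=
  Nonempty (ShiftSpace A ≃ₜ (ℕ → Bool))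

/-- The continuous full group `Γ_A`. -/
def fullGroup {N : ℕ} (A : Fin N → Fin N → Bool) :
    Subgroup (ShiftSpace A ≃ₜ ShiftSpace A) where
  carrier := {τ | ∃ k l : ShiftSpace A → ℕ, Continuous k ∧ Continuous l ∧
    ∀ x, (shiftMap A)^[k x] (τ x) = (shiftMap A)^[l x] x}
  one_mem' := ⟨fun _ => 0, fun _ => 0, continuous_const, continuous_const, fun _ => rfl⟩
  mul_mem' := by
    rintro a b ⟨k1, l1, hk1, hl1, h1⟩ ⟨k2, l2, hk2, hl2, h2⟩
    refine ⟨fun x => k2 x + k1 (b x), fun x => l1 (b x) + l2 x,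
      hk2.add (hk1.comp b.continuous), (hl1.comp b.continuous).add hl2, fun x => ?_⟩
    calc (shiftMap A)^[k2 x + k1 (b x)] ((a * b) x)
        = (shiftMap A)^[k2 x] ((shiftMap A)^[k1 (b x)] (a (b x))) :=
          Function.iterate_add_apply _ _ _ _
      _ = (shiftMap A)^[k2 x] ((shiftMap A)^[l1 (b x)] (b x)) := by rw [h1]
      _ = (shiftMap A)^[l1 (b x)] ((shiftMap A)^[k2 x] (b x)) := by
          rw [← Function.iterate_add_apply, Nat.add_comm, Function.iterate_add_apply]
      _ = (shiftMap A)^[l1 (b x)] ((shiftMap A)^[l2 x] x) := by rw [h2]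
      _ = (shiftMap A)^[l1 (b x) + l2 x] x := (Function.iterate_add_apply _ _ _ _).symm
  inv_mem' := by
    rintro a ⟨k, l, hk, hl, h⟩
    refine ⟨fun x => l (a⁻¹ x), fun x => k (a⁻¹ x),
      hl.comp a.symm.continuous, hk.comp a.symm.continuous, fun x => ?_⟩
    have := (h (a⁻¹ x)).symm
    rwa [show a (a⁻¹ x) = x from a.apply_symm_apply x] at this

/-- The local subgroup `Γ_O` of `Γ_A` associated to a set `O`. -/
def localGroup {N : ℕ} (A : Fin N → Fin N → Bool) (O : Set (ShiftSpace A)) :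
    Subgroup (ShiftSpace A ≃ₜ ShiftSpace A) where
  carrier := {γ | γ ∈ fullGroup A ∧ ∀ x ∉ O, γ x = x}
  one_mem' := ⟨(fullGroup A).one_mem, fun _ _ => rfl⟩
  mul_mem' := by
    rintro a b ⟨haΓ, ha⟩ ⟨hbΓ, hb⟩
    exact ⟨mul_mem haΓ hbΓ, fun x hx => by
      show a (b x) = x
      rw [hb x hx, ha x hx]⟩
  inv_mem' := by
    rintro a ⟨haΓ, ha⟩
    refine ⟨inv_mem haΓ, fun x hx => ?_⟩
    conv_lhs => rw [← ha x hx]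
    exact a.symm_apply_apply x

/-- The commutant in `Γ_A` of a set of homeomorphisms. -/
def commutant {N : ℕ} (A : Fin N → Fin N → Bool)
    (S : Set (ShiftSpace A ≃ₜ ShiftSpace A)) : Set (ShiftSpace A ≃ₜ ShiftSpace A) :=
  {ξ | ξ ∈ fullGroup A ∧ ∀ γ ∈ S, ξ * γ = γ * ξ}

/-- The support `P_γ` of a homeomorphism `γ`. -/
def suppHomeo {N : ℕ} {A : Fin N → Fin N → Bool} (γ : ShiftSpace A ≃ₜ ShiftSpace A) :
    Set (ShiftSpace A) :=
  closure {x | γ x ≠ x}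

/-- The support `P_H` of a set of homeomorphisms. -/
def suppSet {N : ℕ} {A : Fin N → Fin N → Bool} (H : Set (ShiftSpace A ≃ₜ ShiftSpace A)) :
    Set (ShiftSpace A) :=
  closure (⋃ η ∈ H, interior (suppHomeo η))


section Development

variable {N : ℕ} {A : Fin N → Fin N → Bool}

local notation "X" => ShiftSpace A

/-- The cylinder set of radius `n` around `x`. -/
def Cyl (x : ShiftSpace A) (n : ℕ) : Set (ShiftSpace A) := {y | ∀ k < n, y.1 k = x.1 k}

lemma mem_Cyl {x y : ShiftSpace A} {n : ℕ} : y ∈ Cyl x n ↔ ∀ k < n, y.1 k = x.1 k := Iff.rfl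

lemma self_mem_Cyl (x : ShiftSpace A) (n : ℕ) : x ∈ Cyl x n := fun _ _ => rfl

lemma Cyl_nonempty (x : ShiftSpace A) (n : ℕ) : (Cyl x n).Nonempty := ⟨x, self_mem_Cyl x n⟩

lemma Cyl_mono {x : ShiftSpace A} {n m : ℕ} (h : n ≤ m) : Cyl x m ⊆ Cyl x n :=
  fun _ hy k hk => hy k (lt_of_lt_of_le hk h)

lemma Cyl_eq_of_mem {x y : ShiftSpace A} {n : ℕ} (h : y ∈ Cyl x n) : Cyl y n = Cyl x n := by
  ext z; constructor <;> intro hz k hk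
  · rw [hz k hk, h k hk]
  · rw [hz k hk, ← h k hk]

lemma Cyl_disjoint_of_ne {x y : ShiftSpace A} {n : ℕ} {k : ℕ} (hk : k < n)
    (h : x.1 k ≠ y.1 k) : Cyl x n ∩ Cyl y n = ∅ := by
  ext z; simp only [Set.mem_inter_iff, Set.mem_empty_iff_false, iff_false]
  rintro ⟨h1, h2⟩; exact h ((h1 k hk).symm.trans (h2 k hk))

/-- The restriction map to the first `n` coordinates. -/
def resMap (n : ℕ) (y : ShiftSpace A) : Fin n → Fin N := fun k => y.1 k.1

lemma continuous_coord (k : ℕ) : Continuous fun y : ShiftSpace A => y.1 k :=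
  (continuous_apply k).comp continuous_subtype_val

lemma continuous_resMap (n : ℕ) : Continuous (resMap (A := A) n) :=
  continuous_pi fun k => continuous_coord k.1

lemma Cyl_eq_preimage (x : ShiftSpace A) (n : ℕ) :
    Cyl x n = resMap n ⁻¹' {fun k : Fin n => x.1 k.1} := by
  ext y
  simp only [mem_Cyl, Set.mem_preimage, Set.mem_singleton_iff, funext_iff, resMap]
  exact ⟨fun h k => h k.1 k.2, fun h k hk => h ⟨k, hk⟩⟩

lemma isClopen_Cyl (x : ShiftSpace A) (n : ℕ) : IsClopen (Cyl x n) := by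
  rw [Cyl_eq_preimage]
  exact (isClopen_discrete _).preimage (continuous_resMap n)

/-- Open sets contain cylinders around each of their points. -/
lemma exists_Cyl_subset {G : Set (ShiftSpace A)} (hG : IsOpen G) {x : ShiftSpace A}
    (hx : x ∈ G) : ∃ n, Cyl x n ⊆ G := by
  rw [isOpen_induced_iff] at hG
  obtain ⟨t, ht, rfl⟩ := hG
  obtain ⟨I, u, hIu, hsub⟩ := isOpen_pi_iff.mp ht x.1 hx
  rcases I.eq_empty_or_nonempty with h | h
  · exact ⟨0, fun y _ => hsub (by simp [h])⟩
  · refine ⟨(I.max' h) + 1, fun y hy => hsub fun a ha => ?_⟩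
    rw [mem_Cyl] at hy
    rw [hy a (Nat.lt_succ_of_le (I.le_max' a ha))]
    exact (hIu a ha).2

lemma isOpen_iff_Cyl {G : Set (ShiftSpace A)} :
    IsOpen G ↔ ∀ x ∈ G, ∃ n, Cyl x n ⊆ G := by
  constructor
  · exact fun hG x hx => exists_Cyl_subset hG hx
  · intro h
    have h' : ∀ x : G, ∃ n, Cyl x.1 n ⊆ G := fun x => h x.1 x.2
    choose f hf using h'
    have hG : G = ⋃ x : G, Cyl x.1 (f x) := by
      apply Set.Subset.antisymm
      · intro y hy; exact Set.mem_iUnion.mpr ⟨⟨y, hy⟩, self_mem_Cyl _ _⟩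
      · intro y hy; obtain ⟨x, hx⟩ := Set.mem_iUnion.mp hy; exact hf x hx
    rw [hG]; exact isOpen_iUnion fun x => (isClopen_Cyl _ _).isOpen

end Development
section Development2

variable {N : ℕ} {A : Fin N → Fin N → Bool}

lemma continuous_of_Cyl {f : ShiftSpace A → ShiftSpace A}
    (h : ∀ x m, ∃ n, ∀ y ∈ Cyl x n, f y ∈ Cyl (f x) m) : Continuous f := by
  rw [continuous_def]
  intro G hG
  rw [isOpen_iff_Cyl]
  intro x hx
  obtain ⟨m, hm⟩ := exists_Cyl_subset hG hx
  obtain ⟨n, hn⟩ := h x m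
  exact ⟨n, fun y hy => hm (hn y hy)⟩

lemma continuous_of_locConst {β : Type*} [TopologicalSpace β] {f : ShiftSpace A → β}
    (h : ∀ x, ∃ n, ∀ y ∈ Cyl x n, f y = f x) : Continuous f := by
  rw [continuous_def]
  intro G hG
  rw [isOpen_iff_Cyl]
  intro x hx
  obtain ⟨n, hn⟩ := h x
  exact ⟨n, fun y hy => by rw [Set.mem_preimage, hn y hy]; exact hx⟩

lemma shift_iterate_coord (m : ℕ) (x : ShiftSpace A) (n : ℕ) :
    ((shiftMap A)^[m] x).1 n = x.1 (n + m) := by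
  induction m generalizing x n with
  | zero => rfl
  | succ m ih =>
      rw [Function.iterate_succ_apply, ih (shiftMap A x) n]
      show x.1 (n + m + 1) = x.1 (n + (m + 1))
      ring_nf

/-- Glue: the point with the first `q` coordinates of `t` followed by `x` shifted by `p`. -/
def glue (t : ShiftSpace A) (q : ℕ) (x : ShiftSpace A) (p : ℕ) : ShiftSpace A :=
  if h : 1 ≤ q ∧ A (t.1 (q - 1)) (x.1 p) = true then
    ⟨fun n => if n < q then t.1 n else x.1 (n - q + p), by
      intro n
      rcases lt_trichotomy (n + 1) q with h1 | h1 | h1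
      · simp only [if_pos (Nat.lt_of_succ_lt h1), if_pos h1]
        exact t.2 n
      · have hn : n < q := by omega
        have hq1 : n = q - 1 := by omega
        simp only [if_pos hn, if_neg (by omega : ¬ n + 1 < q)]
        have : n + 1 - q + p = p := by omega
        rw [this, hq1]
        exact h.2
      · have hn : ¬ n < q := by omega
        simp only [if_neg hn, if_neg (by omega : ¬ n + 1 < q)]
        have : n + 1 - q + p = (n - q + p) + 1 := by omega
        rw [this]
        exact x.2 (n - q + p)⟩
  else x

lemma glue_coord {t : ShiftSpace A} {q : ℕ} {x : ShiftSpace A} {p : ℕ}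
    (hq : 1 ≤ q) (hA : A (t.1 (q - 1)) (x.1 p) = true) (n : ℕ) :
    (glue t q x p).1 n = if n < q then t.1 n else x.1 (n - q + p) := by
  rw [glue, dif_pos ⟨hq, hA⟩]

lemma glue_compat {t : ShiftSpace A} {q : ℕ} {x : ShiftSpace A} {p : ℕ} (hlast : x.1 (p - 1) = t.1 (q - 1)) (hp : 1 ≤ p) :
    A (t.1 (q - 1)) (x.1 p) = true := by
  rw [← hlast]
  have := x.2 (p - 1)
  rwa [Nat.sub_add_cancel hp] at this

lemma glue_mem_Cyl {t : ShiftSpace A} {q : ℕ} {x : ShiftSpace A} {p : ℕ}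
    (hq : 1 ≤ q) (hA : A (t.1 (q - 1)) (x.1 p) = true) :
    glue t q x p ∈ Cyl t q := by
  intro k hk
  rw [glue_coord hq hA, if_pos hk]

lemma glue_glue {t : ShiftSpace A} {q : ℕ} {z : ShiftSpace A} {p : ℕ} {x : ShiftSpace A}
    (hq : 1 ≤ q) (hp : 1 ≤ p) (hx : x ∈ Cyl z p) (hlast : z.1 (p - 1) = t.1 (q - 1))
    (hA : A (t.1 (q - 1)) (x.1 p) = true)
    (hA' : A (z.1 (p - 1)) ((glue t q x p).1 q) = true) :
    glue z p (glue t q x p) q = x := by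
  apply Subtype.ext
  funext n
  rw [glue_coord hp hA']
  by_cases hn : n < p
  · rw [if_pos hn]; exact (hx n hn).symm
  · rw [if_neg hn, glue_coord hq hA, if_neg (by omega : ¬ n - p + q < q)]
    have : n - p + q - q + p = n := by omega
    rw [this]

end Development2
section Development3

variable {N : ℕ} {A : Fin N → Fin N → Bool}

lemma Cyl_mem_congr {x y z : ShiftSpace A} {n p : ℕ} (hy : y ∈ Cyl x n) (hpn : p ≤ n) :
    y ∈ Cyl z p ↔ x ∈ Cyl z p := by
  constructor <;> intro h k hk
  · rw [← hy k (lt_of_lt_of_le hk hpn)]; exact h k hk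
  · rw [hy k (lt_of_lt_of_le hk hpn)]; exact h k hk

open Classical in
/-- The function swapping the cylinders `Cyl z p` and `Cyl t q` by prefix replacement. -/
noncomputable def swapFun (z : ShiftSpace A) (p : ℕ) (t : ShiftSpace A) (q : ℕ)
    (x : ShiftSpace A) : ShiftSpace A :=
  if x ∈ Cyl z p then glue t q x p else if x ∈ Cyl t q then glue z p x q else x

variable {z t : ShiftSpace A} {p q : ℕ}

lemma swapFun_of_mem_left (hx : x ∈ Cyl z p) (hx' : x ∉ Cyl t q) :
    swapFun z p t q x = glue t q x p := by
  rw [swapFun, if_pos hx]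

lemma swapFun_of_mem_right (hx : x ∉ Cyl z p) (hx' : x ∈ Cyl t q) :
    swapFun z p t q x = glue z p x q := by
  rw [swapFun, if_neg hx, if_pos hx']

lemma swapFun_of_not_mem (hx : x ∉ Cyl z p) (hx' : x ∉ Cyl t q) :
    swapFun z p t q x = x := by
  rw [swapFun, if_neg hx, if_neg hx']

lemma disj_not_mem (hdisj : Cyl z p ∩ Cyl t q = ∅) {x : ShiftSpace A}
    (hx : x ∈ Cyl z p) : x ∉ Cyl t q := by
  intro h
  have : x ∈ Cyl z p ∩ Cyl t q := ⟨hx, h⟩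
  rw [hdisj] at this
  exact this

lemma compat_left (hp : 1 ≤ p) (hlast : z.1 (p - 1) = t.1 (q - 1))
    {x : ShiftSpace A} (hx : x ∈ Cyl z p) : A (t.1 (q - 1)) (x.1 p) = true :=
  glue_compat (by rw [hx (p-1) (by omega), hlast]) hp

lemma compat_right (hq : 1 ≤ q) (hlast : z.1 (p - 1) = t.1 (q - 1))
    {x : ShiftSpace A} (hx : x ∈ Cyl t q) : A (z.1 (p - 1)) (x.1 q) = true :=
  glue_compat (by rw [hx (q-1) (by omega), ← hlast]) hq

lemma swapFun_swap_left (hp : 1 ≤ p) (hq : 1 ≤ q)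
    (hlast : z.1 (p - 1) = t.1 (q - 1)) (hdisj : Cyl z p ∩ Cyl t q = ∅)
    {x : ShiftSpace A} (hx : x ∈ Cyl z p) :
    swapFun z p t q x ∈ Cyl t q ∧ swapFun z p t q (swapFun z p t q x) = x := by
  have hA := compat_left hp hlast hx
  have h1 : swapFun z p t q x = glue t q x p :=
    swapFun_of_mem_left hx (disj_not_mem hdisj hx)
  have hmem : glue t q x p ∈ Cyl t q := glue_mem_Cyl hq hA
  have hnot : glue t q x p ∉ Cyl z p := by
    intro h
    have : glue t q x p ∈ Cyl z p ∩ Cyl t q := ⟨h, hmem⟩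
    rw [hdisj] at this
    exact this
  refine ⟨h1 ▸ hmem, ?_⟩
  rw [h1, swapFun_of_mem_right hnot hmem]
  apply glue_glue hq hp hx hlast hA
  rw [glue_coord hq hA, if_neg (by omega : ¬ q < q)]
  have h2 : q - q + p = p := by omega
  rw [h2, ← hx (p-1) (by omega)]
  have h3 := x.2 (p-1)
  rwa [Nat.sub_add_cancel hp] at h3

end Development3
section Development4

variable {N : ℕ} {A : Fin N → Fin N → Bool} {z t : ShiftSpace A} {p q : ℕ}

lemma swapFun_comm (hdisj : Cyl z p ∩ Cyl t q = ∅) (x : ShiftSpace A) :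
    swapFun z p t q x = swapFun t q z p x := by
  by_cases h1 : x ∈ Cyl z p
  · rw [swapFun_of_mem_left h1 (disj_not_mem hdisj h1),
      swapFun_of_mem_right (disj_not_mem hdisj h1) h1]
  · by_cases h2 : x ∈ Cyl t q
    · rw [swapFun_of_mem_right h1 h2, swapFun_of_mem_left h2 h1]
    · rw [swapFun_of_not_mem h1 h2, swapFun_of_not_mem h2 h1]

lemma disj_comm' (hdisj : Cyl z p ∩ Cyl t q = ∅) : Cyl t q ∩ Cyl z p = ∅ := by
  rw [Set.inter_comm]; exact hdisj

lemma swapFun_invol (hp : 1 ≤ p) (hq : 1 ≤ q)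
    (hlast : z.1 (p - 1) = t.1 (q - 1)) (hdisj : Cyl z p ∩ Cyl t q = ∅)
    (x : ShiftSpace A) : swapFun z p t q (swapFun z p t q x) = x := by
  by_cases h1 : x ∈ Cyl z p
  · exact (swapFun_swap_left hp hq hlast hdisj h1).2
  · by_cases h2 : x ∈ Cyl t q
    · rw [swapFun_comm hdisj, swapFun_comm hdisj]
      exact (swapFun_swap_left hq hp hlast.symm (disj_comm' hdisj) h2).2
    · rw [swapFun_of_not_mem h1 h2, swapFun_of_not_mem h1 h2]

lemma swapFun_continuous (hp : 1 ≤ p) (hq : 1 ≤ q)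
    (hlast : z.1 (p - 1) = t.1 (q - 1)) (hdisj : Cyl z p ∩ Cyl t q = ∅) :
    Continuous (swapFun z p t q) := by
  apply continuous_of_Cyl
  intro x m
  refine ⟨max (max p q) (m + p + q), fun y hy => ?_⟩
  have hzy : y ∈ Cyl z p ↔ x ∈ Cyl z p :=
    Cyl_mem_congr hy (le_trans (le_max_left p q) (le_max_left _ _))
  have hty : y ∈ Cyl t q ↔ x ∈ Cyl t q :=
    Cyl_mem_congr hy (le_trans (le_max_right p q) (le_max_left _ _))
  intro j hj
  by_cases h1 : x ∈ Cyl z p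
  · have hAy := compat_left hp hlast (hzy.mpr h1)
    have hAx := compat_left hp hlast h1
    rw [swapFun_of_mem_left (hzy.mpr h1) (disj_not_mem hdisj (hzy.mpr h1)),
      swapFun_of_mem_left h1 (disj_not_mem hdisj h1),
      glue_coord hq hAy, glue_coord hq hAx]
    by_cases hjq : j < q
    · rw [if_pos hjq, if_pos hjq]
    · rw [if_neg hjq, if_neg hjq]
      exact hy _ (by omega)
  · by_cases h2 : x ∈ Cyl t q
    · have hAy := compat_right hq hlast (hty.mpr h2)
      have hAx := compat_right hq hlast h2
      rw [swapFun_of_mem_right (fun h => h1 (hzy.mp h)) (hty.mpr h2),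
        swapFun_of_mem_right h1 h2,
        glue_coord hp hAy, glue_coord hp hAx]
      by_cases hjp : j < p
      · rw [if_pos hjp, if_pos hjp]
      · rw [if_neg hjp, if_neg hjp]
        exact hy _ (by omega)
    · rw [swapFun_of_not_mem (fun h => h1 (hzy.mp h)) (fun h => h2 (hty.mp h)),
        swapFun_of_not_mem h1 h2]
      exact hy _ (by omega)

/-- The homeomorphism swapping two disjoint cylinders by prefix replacement. -/
noncomputable def swapHomeo (z : ShiftSpace A) (p : ℕ) (t : ShiftSpace A) (q : ℕ)
    (hp : 1 ≤ p) (hq : 1 ≤ q) (hlast : z.1 (p - 1) = t.1 (q - 1))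
    (hdisj : Cyl z p ∩ Cyl t q = ∅) : ShiftSpace A ≃ₜ ShiftSpace A where
  toFun := swapFun z p t q
  invFun := swapFun z p t q
  left_inv := swapFun_invol hp hq hlast hdisj
  right_inv := swapFun_invol hp hq hlast hdisj
  continuous_toFun := swapFun_continuous hp hq hlast hdisj
  continuous_invFun := swapFun_continuous hp hq hlast hdisj

variable (hp : 1 ≤ p) (hq : 1 ≤ q) (hlast : z.1 (p - 1) = t.1 (q - 1))
    (hdisj : Cyl z p ∩ Cyl t q = ∅)

@[simp] lemma swapHomeo_apply (x : ShiftSpace A) :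
    swapHomeo z p t q hp hq hlast hdisj x = swapFun z p t q x := rfl

open Classical in
lemma swapHomeo_mem_fullGroup :
    swapHomeo z p t q hp hq hlast hdisj ∈ fullGroup A := by
  refine ⟨fun x => if x ∈ Cyl z p then q else if x ∈ Cyl t q then p else 0,
    fun x => if x ∈ Cyl z p then p else if x ∈ Cyl t q then q else 0, ?_, ?_, ?_⟩
  · apply continuous_of_locConst
    intro x
    refine ⟨max p q, fun y hy => ?_⟩
    rw [if_congr (Cyl_mem_congr hy (le_max_left p q)) rfl rfl,
      if_congr (Cyl_mem_congr hy (le_max_right p q)) rfl rfl]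
  · apply continuous_of_locConst
    intro x
    refine ⟨max p q, fun y hy => ?_⟩
    rw [if_congr (Cyl_mem_congr hy (le_max_left p q)) rfl rfl,
      if_congr (Cyl_mem_congr hy (le_max_right p q)) rfl rfl]
  · intro x
    beta_reduce
    by_cases h1 : x ∈ Cyl z p
    · rw [if_pos h1, if_pos h1]
      have hA := compat_left hp hlast h1
      apply Subtype.ext
      funext n
      rw [shift_iterate_coord, shift_iterate_coord]
      show (swapFun z p t q x).1 (n + q) = x.1 (n + p)
      rw [swapFun_of_mem_left h1 (disj_not_mem hdisj h1), glue_coord hq hA,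
        if_neg (by omega : ¬ n + q < q)]
      have h5 : n + q - q + p = n + p := by omega
      rw [h5]
    · rw [if_neg h1, if_neg h1]
      by_cases h2 : x ∈ Cyl t q
      · rw [if_pos h2, if_pos h2]
        have hA := compat_right hq hlast h2
        apply Subtype.ext
        funext n
        rw [shift_iterate_coord, shift_iterate_coord]
        show (swapFun z p t q x).1 (n + p) = x.1 (n + q)
        rw [swapFun_of_mem_right h1 h2, glue_coord hp hA,
          if_neg (by omega : ¬ n + p < p)]
        have h5 : n + p - p + q = n + q := by omega
        rw [h5]
      · rw [if_neg h2, if_neg h2]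
        show (shiftMap A)^[0] (swapFun z p t q x) = _
        rw [swapFun_of_not_mem h1 h2]

lemma swapHomeo_mem_localGroup :
    swapHomeo z p t q hp hq hlast hdisj ∈ localGroup A (Cyl z p ∪ Cyl t q) := by
  refine ⟨swapHomeo_mem_fullGroup hp hq hlast hdisj, fun x hx => ?_⟩
  rw [Set.mem_union] at hx
  push_neg at hx
  exact swapFun_of_not_mem hx.1 hx.2

end Development4
section Development5

variable {N : ℕ} {A : Fin N → Fin N → Bool}

lemma compactSpace_of_condI (hI : ConditionI A) : CompactSpace (ShiftSpace A) :=
  (Classical.choice hI).symm.compactSpace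

/-- Uniform cylinder level for a clopen set. -/
lemma uniform_cyl (hI : ConditionI A) {P : Set (ShiftSpace A)} (hP : IsClopen P) :
    ∃ m, ∀ x ∈ P, Cyl x m ⊆ P := by
  haveI := compactSpace_of_condI hI
  have hcov : ∀ x : ShiftSpace A, ∃ n, Cyl x n ⊆ P ∨ Cyl x n ⊆ Pᶜ := by
    intro x
    by_cases hx : x ∈ P
    · obtain ⟨n, hn⟩ := exists_Cyl_subset hP.isOpen hx; exact ⟨n, Or.inl hn⟩
    · obtain ⟨n, hn⟩ := exists_Cyl_subset hP.compl.isOpen hx; exact ⟨n, Or.inr hn⟩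
  choose f hf using hcov
  obtain ⟨s, hs⟩ := IsCompact.elim_finite_subcover isCompact_univ
    (fun x : ShiftSpace A => Cyl x (f x)) (fun x => (isClopen_Cyl _ _).isOpen)
    (fun x _ => Set.mem_iUnion.mpr ⟨x, self_mem_Cyl _ _⟩)
  refine ⟨s.sup f, fun x hx y hy => ?_⟩
  obtain ⟨c, hc1, hc2⟩ : ∃ c ∈ s, x ∈ Cyl c (f c) := by
    simpa using hs (Set.mem_univ x)
  have hy' : y ∈ Cyl c (f c) := fun k hk => by
    rw [hy k (lt_of_lt_of_le hk (Finset.le_sup hc1)), hc2 k hk]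
  rcases hf c with h | h
  · exact h hy'
  · exact absurd hx (h hc2)

lemma bounded_of_continuous_nat (hI : ConditionI A) {l : ShiftSpace A → ℕ}
    (hl : Continuous l) : ∃ L, ∀ x, l x ≤ L := by
  haveI := compactSpace_of_condI hI
  obtain ⟨s, hs⟩ := IsCompact.elim_finite_subcover isCompact_univ
    (fun c : ℕ => l ⁻¹' {c}) (fun c => (isOpen_discrete _).preimage hl)
    (fun x _ => Set.mem_iUnion.mpr ⟨l x, rfl⟩)
  refine ⟨s.sup id, fun x => ?_⟩
  obtain ⟨c, hc1, hc2⟩ : ∃ c ∈ s, l x = c := by simpa using hs (Set.mem_univ x)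
  rw [hc2]
  exact Finset.le_sup (f := id) hc1

lemma cantor_two_points {G : Set (ℕ → Bool)} (hG : IsOpen G) {c : ℕ → Bool} (hc : c ∈ G) :
    ∃ d ∈ G, d ≠ c := by
  obtain ⟨I, u, hIu, hsub⟩ := isOpen_pi_iff.mp hG c hc
  obtain ⟨i, hi⟩ := Infinite.exists_notMem_finset I
  refine ⟨fun j => if j ∈ I then c j else !c j, hsub fun a ha => ?_, fun h => ?_⟩
  · rw [if_pos (Finset.mem_coe.mp ha)]; exact (hIu a ha).2
  · have := congrFun h i
    simp only [if_neg hi] at this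
    exact Bool.not_ne_self _ this

lemma split_clopen (hI : ConditionI A) {K : Set (ShiftSpace A)} (hK : IsClopen K)
    (hne : K.Nonempty) :
    ∃ K₁ K₂ : Set (ShiftSpace A), IsClopen K₁ ∧ IsClopen K₂ ∧ K₁.Nonempty ∧ K₂.Nonempty ∧
      K₁ ⊆ K ∧ K₂ ⊆ K ∧ K₁ ∩ K₂ = ∅ := by
  obtain ⟨φ⟩ := hI
  obtain ⟨x₀, hx₀⟩ := hne
  set G : Set (ℕ → Bool) := φ.symm ⁻¹' K with hG
  have hGopen : IsOpen G := hK.isOpen.preimage φ.symm.continuous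
  have hcG : φ x₀ ∈ G := by simp [hG, hx₀]
  obtain ⟨d, hd, hdc⟩ := cantor_two_points hGopen hcG
  obtain ⟨j, hj⟩ := Function.ne_iff.mp hdc
  refine ⟨K ∩ φ ⁻¹' {e | e j = φ x₀ j}, K ∩ φ ⁻¹' {e | e j ≠ φ x₀ j}, ?_, ?_, ?_, ?_,
    Set.inter_subset_left, Set.inter_subset_left, ?_⟩
  · refine hK.inter (IsClopen.preimage ?_ φ.continuous)
    have : {e : ℕ → Bool | e j = φ x₀ j} = (fun e : ℕ → Bool => e j) ⁻¹' {φ x₀ j} := rfl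
    rw [this]
    exact (isClopen_discrete _).preimage (continuous_apply j)
  · refine hK.inter (IsClopen.preimage ?_ φ.continuous)
    have : {e : ℕ → Bool | e j ≠ φ x₀ j} = ((fun e : ℕ → Bool => e j) ⁻¹' {φ x₀ j})ᶜ := rfl
    rw [this]
    exact ((isClopen_discrete _).preimage (continuous_apply j)).compl
  · exact ⟨x₀, hx₀, rfl⟩
  · refine ⟨φ.symm d, hd, ?_⟩
    show φ (φ.symm d) j ≠ φ x₀ j
    rw [φ.apply_symm_apply]
    exact hj
  · ext y
    simp only [Set.mem_inter_iff, Set.mem_preimage, Set.mem_setOf_eq,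
      Set.mem_empty_iff_false, iff_false]
    rintro ⟨⟨-, h1⟩, ⟨-, h2⟩⟩
    exact h2 h1

lemma split_clopen_family (hI : ConditionI A) {K : Set (ShiftSpace A)} (hK : IsClopen K)
    (hne : K.Nonempty) {ι : Type*} (s : Finset ι) :
    ∃ Z : ι → Set (ShiftSpace A), (∀ i ∈ s, IsClopen (Z i) ∧ (Z i).Nonempty ∧ Z i ⊆ K) ∧
      ∀ i ∈ s, ∀ j ∈ s, i ≠ j → Z i ∩ Z j = ∅ := by
  classical
  induction s using Finset.induction_on generalizing K with
  | empty => exact ⟨fun _ => K, by simp, by simp⟩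
  | @insert a s ha ih =>
      obtain ⟨K₁, K₂, hK₁, hK₂, hne₁, hne₂, hsub₁, hsub₂, hd⟩ := split_clopen hI hK hne
      obtain ⟨Z, hZ1, hZ2⟩ := ih hK₂ hne₂
      refine ⟨Function.update Z a K₁, fun i hi => ?_, fun i hi j hj hij => ?_⟩
      · rcases Finset.mem_insert.mp hi with rfl | hi'
        · rw [Function.update_self]
          exact ⟨hK₁, hne₁, hsub₁⟩
        · rw [Function.update_of_ne (by rintro rfl; exact ha hi') _ _]
          obtain ⟨h1, h2, h3⟩ := hZ1 i hi' 
          exact ⟨h1, h2, h3.trans hsub₂⟩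
      · rcases Finset.mem_insert.mp hi with rfl | hi' <;>
          rcases Finset.mem_insert.mp hj with rfl | hj'
        · exact absurd rfl hij
        · rw [Function.update_self, Function.update_of_ne (by rintro rfl; exact ha hj') _ _]
          apply Set.eq_empty_of_subset_empty
          rw [← hd]
          exact Set.inter_subset_inter_right _ (hZ1 j hj').2.2
        · rw [Function.update_of_ne (by rintro rfl; exact ha hi') _ _, Function.update_self]
          apply Set.eq_empty_of_subset_empty
          intro y hy
          rw [← hd]
          exact ⟨hy.2, (hZ1 i hi').2.2 hy.1⟩
        · rw [Function.update_of_ne (by rintro rfl; exact ha hi') _ _,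
            Function.update_of_ne (by rintro rfl; exact ha hj') _ _]
          exact hZ2 i hi' j hj' hij

end Development5
section Development6

variable {N : ℕ} {A : Fin N → Fin N → Bool}

lemma exists_next (hA : MatrixIrreducible A) (e : Fin N) : ∃ d, A e d = true := by
  obtain ⟨n, hn, w, h0, -, hw⟩ := hA e e
  exact ⟨w 1, h0 ▸ hw 0 hn⟩

/-- A point of the shift space whose orbit follows a given finite path ending with
an arbitrary continuation. -/
lemma exists_point_path (hA : MatrixIrreducible A) (c e : Fin N) :
    ∃ (P : ShiftSpace A) (n : ℕ), 1 ≤ n ∧ P.1 0 = c ∧ P.1 n = e := by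
  classical
  obtain ⟨n, hn, w, h0, hn', hw⟩ := hA c e
  set nx : Fin N → Fin N := fun d => Classical.choose (exists_next hA d) with hnx
  have hnxA : ∀ d, A d (nx d) = true := fun d => Classical.choose_spec (exists_next hA d)
  refine ⟨⟨fun i => if i < n then w i else nx^[i - n] (w n), ?_⟩, n, hn, ?_, ?_⟩
  · intro i
    beta_reduce
    rcases lt_trichotomy (i + 1) n with h1 | h1 | h1
    · rw [if_pos (by omega), if_pos h1]
      exact hw i (by omega)
    · rw [if_pos (by omega), if_neg (by omega)]
      have h2 : i + 1 - n = 0 := by omega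
      rw [h2, Function.iterate_zero_apply, ← h1]
      exact hw i (by omega)
    · rw [if_neg (by omega), if_neg (by omega)]
      have h2 : i + 1 - n = (i - n) + 1 := by omega
      rw [h2, Function.iterate_succ_apply']
      exact hnxA _
  · show (if 0 < n then w 0 else _) = c
    rw [if_pos hn, h0]
  · show (if n < n then w n else nx^[n - n] (w n)) = e
    rw [if_neg (lt_irrefl n)]
    have h2 : n - n = 0 := by omega
    rw [h2]
    exact hn'

/-- Inside any cylinder one finds a deeper cylinder whose word ends with a
prescribed letter. -/
lemma extend_cyl (hA : MatrixIrreducible A) (u : ShiftSpace A) (a : ℕ) (ha : 1 ≤ a)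
    (e : Fin N) :
    ∃ (s : ShiftSpace A) (b : ℕ), 1 ≤ b ∧ Cyl s b ⊆ Cyl u a ∧ s.1 (b - 1) = e := by
  obtain ⟨P, n, hn, hP0, hPn⟩ := exists_point_path hA (u.1 (a - 1)) e
  have hApre : A (u.1 (a - 1)) (P.1 1) = true := by
    rw [← hP0]
    exact P.2 0
  refine ⟨glue u a P 1, a + n, by omega, ?_, ?_⟩
  · have hmem : glue u a P 1 ∈ Cyl u a := glue_mem_Cyl ha hApre
    calc Cyl (glue u a P 1) (a + n) ⊆ Cyl (glue u a P 1) a := Cyl_mono (by omega)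
      _ = Cyl u a := Cyl_eq_of_mem hmem
  · rw [glue_coord ha hApre, if_neg (by omega : ¬ a + n - 1 < a)]
    have h2 : a + n - 1 - a + 1 = n := by omega
    rw [h2, hPn]

/-- In any nonempty open set one finds a cylinder whose word ends with a
prescribed letter. -/
lemma exists_target_cyl (hA : MatrixIrreducible A) {Z : Set (ShiftSpace A)}
    (hZ : IsOpen Z) (hne : Z.Nonempty) (e : Fin N) :
    ∃ (s : ShiftSpace A) (b : ℕ), 1 ≤ b ∧ Cyl s b ⊆ Z ∧ s.1 (b - 1) = e := by
  obtain ⟨u, hu⟩ := hne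
  obtain ⟨a₀, ha₀⟩ := exists_Cyl_subset hZ hu
  obtain ⟨s, b, hb, hsub, hlast⟩ := extend_cyl hA u (max a₀ 1) (le_max_right _ _) e
  exact ⟨s, b, hb, fun y hy => ha₀ (Cyl_mono (le_max_left a₀ 1) (hsub hy)), hlast⟩

end Development6
section Development7

variable {N : ℕ} {A : Fin N → Fin N → Bool}

lemma localGroup_le_fullGroup (O : Set (ShiftSpace A)) : localGroup A O ≤ fullGroup A :=
  fun _ h => h.1

lemma localGroup_mono {O O' : Set (ShiftSpace A)} (h : O ⊆ O') :
    localGroup A O ≤ localGroup A O' :=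
  fun _ hγ => ⟨hγ.1, fun x hx => hγ.2 x fun hxO => hx (h hxO)⟩

lemma mem_localGroup_univ {γ : ShiftSpace A ≃ₜ ShiftSpace A} (hγ : γ ∈ fullGroup A) :
    γ ∈ localGroup A (Set.univ : Set (ShiftSpace A)) :=
  ⟨hγ, fun x hx => absurd (Set.mem_univ x) hx⟩

lemma homeo_image_clopen (η : ShiftSpace A ≃ₜ ShiftSpace A) {O : Set (ShiftSpace A)}
    (hO : IsClopen O) : IsClopen ((η : ShiftSpace A → ShiftSpace A) '' O) := by
  rw [show (η : ShiftSpace A → ShiftSpace A) '' O = η.symm ⁻¹' O from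
    η.toEquiv.image_eq_preimage_symm O]
  exact hO.preimage η.symm.continuous

lemma conj_mem_localGroup {η ρ : ShiftSpace A ≃ₜ ShiftSpace A} {O : Set (ShiftSpace A)}
    (hη : η ∈ fullGroup A) (hρ : ρ ∈ localGroup A O) :
    η * ρ * η⁻¹ ∈ localGroup A ((η : ShiftSpace A → ShiftSpace A) '' O) := by
  refine ⟨mul_mem (mul_mem hη hρ.1) (inv_mem hη), fun x hx => ?_⟩
  have h1 : η.symm x ∉ O := by
    intro h
    exact hx ⟨η.symm x, h, η.apply_symm_apply x⟩
  show η (ρ (η.symm x)) = x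
  rw [hρ.2 _ h1, η.apply_symm_apply]

lemma localGroup_image_le {η : ShiftSpace A ≃ₜ ShiftSpace A} {O : Set (ShiftSpace A)}
    (hη : η ∈ fullGroup A) {G : Subgroup (ShiftSpace A ≃ₜ ShiftSpace A)}
    (hO : localGroup A O ≤ G) (hηG : η ∈ G) :
    localGroup A ((η : ShiftSpace A → ShiftSpace A) '' O) ≤ G := by
  intro θ hθ
  have h1 : η⁻¹ * θ * (η⁻¹)⁻¹ ∈ localGroup A ((η⁻¹ : ShiftSpace A ≃ₜ ShiftSpace A) ''
      ((η : ShiftSpace A → ShiftSpace A) '' O)) :=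
    conj_mem_localGroup (inv_mem hη) hθ
  have h2 : ((η⁻¹ : ShiftSpace A ≃ₜ ShiftSpace A) : ShiftSpace A → ShiftSpace A) ''
      ((η : ShiftSpace A → ShiftSpace A) '' O) = O := by
    rw [Set.image_image]
    have : ∀ x, (η⁻¹ : ShiftSpace A ≃ₜ ShiftSpace A) (η x) = x := fun x =>
      η.symm_apply_apply x
    simp only [this, Set.image_id']
  rw [h2] at h1
  have h3 : θ = η * (η⁻¹ * θ * (η⁻¹)⁻¹) * η⁻¹ := by group
  rw [h3]
  exact mul_mem (mul_mem hηG (hO h1)) (inv_mem hηG)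

/-- The normal form of an element of the full group: on each cylinder of a
sufficiently fine level, it acts by prefix replacement. -/
lemma normal_form (hI : ConditionI A) {γ : ShiftSpace A ≃ₜ ShiftSpace A}
    (hγ : γ ∈ fullGroup A) (m₀ : ℕ) :
    ∃ (n : ℕ) (k l : ShiftSpace A → ℕ), m₀ ≤ n ∧
      (∀ x, (shiftMap A)^[k x] (γ x) = (shiftMap A)^[l x] x) ∧
      (∀ x, l x + m₀ < n) ∧
      (∀ x y, y ∈ Cyl x n → k y = k x ∧ l y = l x ∧ ∀ i < k x, (γ y).1 i = (γ x).1 i) := by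
  haveI := compactSpace_of_condI hI
  obtain ⟨k, l, hk, hl, heq⟩ := hγ
  obtain ⟨L, hL⟩ := bounded_of_continuous_nat hI hl
  have hloc : ∀ x : ShiftSpace A, ∃ n, ∀ y ∈ Cyl x n,
      k y = k x ∧ l y = l x ∧ ∀ i < k x, (γ y).1 i = (γ x).1 i := by
    intro x
    obtain ⟨n₁, hn₁⟩ := exists_Cyl_subset ((isOpen_discrete {k x}).preimage hk)
      (show x ∈ k ⁻¹' {k x} from rfl)
    obtain ⟨n₂, hn₂⟩ := exists_Cyl_subset ((isOpen_discrete {l x}).preimage hl)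
      (show x ∈ l ⁻¹' {l x} from rfl)
    obtain ⟨n₃, hn₃⟩ := exists_Cyl_subset
      ((isClopen_Cyl (γ x) (k x)).isOpen.preimage γ.continuous)
      (show x ∈ γ ⁻¹' (Cyl (γ x) (k x)) from self_mem_Cyl _ _)
    refine ⟨max (max n₁ n₂) n₃, fun y hy => ⟨?_, ?_, ?_⟩⟩
    · exact hn₁ (Cyl_mono (le_trans (le_max_left n₁ n₂) (le_max_left _ _)) hy)
    · exact hn₂ (Cyl_mono (le_trans (le_max_right n₁ n₂) (le_max_left _ _)) hy)
    · exact fun i hi => hn₃ (Cyl_mono (le_max_right _ _) hy) i hi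
  choose f hf using hloc
  obtain ⟨s, hs⟩ := IsCompact.elim_finite_subcover isCompact_univ
    (fun x : ShiftSpace A => Cyl x (f x)) (fun x => (isClopen_Cyl _ _).isOpen)
    (fun x _ => Set.mem_iUnion.mpr ⟨x, self_mem_Cyl _ _⟩)
  refine ⟨max (s.sup f) (m₀ + L + 1), k, l,
    le_trans (by omega : m₀ ≤ m₀ + L + 1) (le_max_right _ _), heq,
    fun x => lt_of_lt_of_le (by have := hL x; omega : l x + m₀ < m₀ + L + 1)
      (le_max_right _ _),
    fun x y hy => ?_⟩
  obtain ⟨c, hc1, hc2⟩ : ∃ c ∈ s, x ∈ Cyl c (f c) := by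
    simpa using hs (Set.mem_univ x)
  have hn' : f c ≤ max (s.sup f) (m₀ + L + 1) :=
    le_trans (Finset.le_sup hc1) (le_max_left _ _)
  have hy' : y ∈ Cyl c (f c) := fun j hj => by
    rw [hy j (lt_of_lt_of_le hj hn'), hc2 j hj]
  obtain ⟨e1, e2, e3⟩ := hf c y hy'
  obtain ⟨d1, d2, d3⟩ := hf c x hc2
  refine ⟨e1.trans d1.symm, e2.trans d2.symm, fun i hi => ?_⟩
  rw [e3 i (by rw [← d1]; exact hi), d3 i (by rw [← d1]; exact hi)]

lemma gamma_coord {γ : ShiftSpace A ≃ₜ ShiftSpace A} {k l : ShiftSpace A → ℕ} {n : ℕ}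
    (heq : ∀ x, (shiftMap A)^[k x] (γ x) = (shiftMap A)^[l x] x)
    (hconst : ∀ x y, y ∈ Cyl x n →
      k y = k x ∧ l y = l x ∧ ∀ i < k x, (γ y).1 i = (γ x).1 i)
    {x y : ShiftSpace A} (hy : y ∈ Cyl x n) (j : ℕ) :
    (γ y).1 j = if j < k x then (γ x).1 j else y.1 (j - k x + l x) := by
  obtain ⟨hky, hly, hcoord⟩ := hconst x y hy
  by_cases hj : j < k x
  · rw [if_pos hj]; exact hcoord j hj
  · rw [if_neg hj]
    have e1 := congrArg (fun z : ShiftSpace A => z.1 (j - k x)) (heq y)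
    simp only [shift_iterate_coord] at e1
    rw [hky, hly] at e1
    have h2 : j - k x + k x = j := by omega
    rw [h2] at e1
    exact e1

lemma gamma_last {γ : ShiftSpace A ≃ₜ ShiftSpace A} {k l : ShiftSpace A → ℕ} {n : ℕ}
    (heq : ∀ x, (shiftMap A)^[k x] (γ x) = (shiftMap A)^[l x] x)
    (hconst : ∀ x y, y ∈ Cyl x n →
      k y = k x ∧ l y = l x ∧ ∀ i < k x, (γ y).1 i = (γ x).1 i)
    (hln : ∀ x, l x < n) (x : ShiftSpace A) :
    (γ x).1 (k x + (n - l x) - 1) = x.1 (n - 1) := by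
  have h1 := gamma_coord heq hconst (self_mem_Cyl x n) (k x + (n - l x) - 1)
  have hln' := hln x
  rw [if_neg (by omega)] at h1
  rw [h1]
  have harr : k x + (n - l x) - 1 - k x + l x = n - 1 := by omega
  rw [harr]

lemma image_Cyl (hI : ConditionI A) {γ : ShiftSpace A ≃ₜ ShiftSpace A}
    {k l : ShiftSpace A → ℕ} {n : ℕ}
    (heq : ∀ x, (shiftMap A)^[k x] (γ x) = (shiftMap A)^[l x] x)
    (hconst : ∀ x y, y ∈ Cyl x n →
      k y = k x ∧ l y = l x ∧ ∀ i < k x, (γ y).1 i = (γ x).1 i)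
    (hln : ∀ x, l x < n) (x : ShiftSpace A) :
    (γ : ShiftSpace A → ShiftSpace A) '' Cyl x n = Cyl (γ x) (k x + (n - l x)) := by
  have hln' := hln x
  apply Set.Subset.antisymm
  · rintro - ⟨y, hy, rfl⟩
    intro j hj
    rw [gamma_coord heq hconst hy j, gamma_coord heq hconst (self_mem_Cyl x n) j]
    by_cases hjk : j < k x
    · rw [if_pos hjk, if_pos hjk]
    · rw [if_neg hjk, if_neg hjk]
      exact hy _ (by omega)
  · intro y' hy'
    have hp1 : 1 ≤ k x + (n - l x) := by omega
    have hlastx : y'.1 (k x + (n - l x) - 1) = x.1 (n - 1) := by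
      rw [hy' _ (by omega), gamma_last heq hconst hln x]
    have hA : A (x.1 (n - 1)) (y'.1 (k x + (n - l x))) = true := by
      rw [← hlastx]
      have := y'.2 (k x + (n - l x) - 1)
      rwa [Nat.sub_add_cancel hp1] at this
    have hn1 : 1 ≤ n := by omega
    refine ⟨glue x n y' (k x + (n - l x)), glue_mem_Cyl hn1 hA, ?_⟩
    apply Subtype.ext
    funext j
    rw [gamma_coord heq hconst (glue_mem_Cyl hn1 hA) j]
    by_cases hjk : j < k x
    · rw [if_pos hjk]
      rw [gamma_coord heq hconst (self_mem_Cyl x n) j, if_pos hjk] at *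
      exact (hy' j (by omega)).symm
    · rw [if_neg hjk]
      rw [glue_coord hn1 hA]
      by_cases hjn : j - k x + l x < n
      · rw [if_pos hjn]
        have h3 := gamma_coord heq hconst (self_mem_Cyl x n) j
        rw [if_neg hjk] at h3
        rw [← h3]
        exact (hy' j (by omega)).symm
      · rw [if_neg hjn]
        have harr : j - k x + l x - n + (k x + (n - l x)) = j := by omega
        rw [harr]

end Development7
section Development8

variable {N : ℕ} {A : Fin N → Fin N → Bool}

lemma swapFun_mapsTo {z t : ShiftSpace A} {p q : ℕ} (hp : 1 ≤ p) (hq : 1 ≤ q)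
    (hlast : z.1 (p - 1) = t.1 (q - 1)) {x : ShiftSpace A}
    (hx : x ∈ Cyl z p ∪ Cyl t q) : swapFun z p t q x ∈ Cyl z p ∪ Cyl t q := by
  by_cases h1 : x ∈ Cyl z p
  · rw [swapFun, if_pos h1]
    exact Or.inr (glue_mem_Cyl hq (compat_left hp hlast h1))
  · rcases hx with h | h2
    · exact absurd h h1
    · rw [swapFun, if_neg h1, if_pos h2]
      exact Or.inl (glue_mem_Cyl hp (compat_right hq hlast h2))

lemma commute_of_disjoint {g h : ShiftSpace A ≃ₜ ShiftSpace A} {S T : Set (ShiftSpace A)}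
    (hg : ∀ x ∉ S, g x = x) (hgS : ∀ x ∈ S, g x ∈ S)
    (hh : ∀ x ∉ T, h x = x) (hhT : ∀ x ∈ T, h x ∈ T)
    (hST : S ∩ T = ∅) : Commute g h := by
  have hdisj : ∀ x, x ∈ S → x ∉ T := fun x hxS hxT => by
    have : x ∈ S ∩ T := ⟨hxS, hxT⟩
    rw [hST] at this
    exact this
  apply Homeomorph.ext
  intro x
  show g (h x) = h (g x)
  by_cases hxS : x ∈ S
  · rw [hh x (hdisj x hxS), hh (g x) (hdisj (g x) (hgS x hxS))]
  · by_cases hxT : x ∈ T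
    · rw [hg x hxS, hg (h x) (fun hmem => hdisj (h x) hmem (hhT x hxT))]
    · rw [hg x hxS, hh x hxT, hg x hxS]

lemma one_apply' (x : ShiftSpace A) : (1 : ShiftSpace A ≃ₜ ShiftSpace A) x = x := rfl

lemma noncommProd_apply_fix {ι : Type*} (s : Finset ι)
    (g : ι → (ShiftSpace A ≃ₜ ShiftSpace A))
    (hcomm : (↑s : Set ι).Pairwise (Function.onFun Commute g)) (x : ShiftSpace A)
    (h : ∀ i ∈ s, g i x = x) : s.noncommProd g hcomm x = x := by
  classical
  revert hcomm h
  induction s using Finset.induction_on with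
  | empty => intro hcomm h; rw [Finset.noncommProd_empty]; rfl
  | @insert a s ha ih =>
      intro hcomm h
      rw [Finset.noncommProd_insert_of_notMem _ _ _ _ ha, homeo_mul_apply,
        ih (hcomm.mono (by simp)) (fun i hi => h i (Finset.mem_insert_of_mem hi))]
      exact h a (Finset.mem_insert_self a s)

lemma noncommProd_apply_single {ι : Type*} (s : Finset ι)
    (g : ι → (ShiftSpace A ≃ₜ ShiftSpace A))
    (hcomm : (↑s : Set ι).Pairwise (Function.onFun Commute g)) {w : ι} (hw : w ∈ s)
    {x y : ShiftSpace A} (hgw : g w x = y)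
    (hfix : ∀ i ∈ s, i ≠ w → g i x = x ∧ g i y = y) :
    s.noncommProd g hcomm x = y := by
  classical
  revert hcomm hfix hw
  induction s using Finset.induction_on with
  | empty => intro hcomm hw hfix; exact absurd hw (Finset.notMem_empty w)
  | @insert a s ha ih =>
      intro hcomm hw hfix
      rw [Finset.noncommProd_insert_of_notMem _ _ _ _ ha, homeo_mul_apply]
      rcases Finset.mem_insert.mp hw with rfl | hw'
      · rw [noncommProd_apply_fix _ _ _ x
          (fun i hi => (hfix i (Finset.mem_insert_of_mem hi)
            (fun hiw => ha (hiw ▸ hi))).1)]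
        exact hgw
      · rw [ih (hcomm.mono (by simp)) hw' 
          (fun i hi hiw => hfix i (Finset.mem_insert_of_mem hi) hiw)]
        exact (hfix a (Finset.mem_insert_self a s)
          (fun haw => ha (haw ▸ hw'))).2

lemma noncommProd_mem_subgroup {ι : Type*} (s : Finset ι)
    (g : ι → (ShiftSpace A ≃ₜ ShiftSpace A))
    (hcomm : (↑s : Set ι).Pairwise (Function.onFun Commute g))
    {G : Subgroup (ShiftSpace A ≃ₜ ShiftSpace A)} (h : ∀ i ∈ s, g i ∈ G) :
    s.noncommProd g hcomm ∈ G :=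
  Subgroup.noncommProd_mem G hcomm h

end Development8
section Development9

variable {N : ℕ} {A : Fin N → Fin N → Bool}

lemma mapsinto_of_fix {γ : ShiftSpace A ≃ₜ ShiftSpace A} {S : Set (ShiftSpace A)}
    (hfix : ∀ x ∉ S, γ x = x) : ∀ x ∈ S, γ x ∈ S := by
  intro x hx
  by_contra h
  have h1 : γ (γ x) = γ x := hfix (γ x) h
  have h2 : γ x = x := γ.injective h1
  rw [h2] at h
  exact h hx

lemma frag_aux (hA : MatrixIrreducible A) (hI : ConditionI A)
    {U V : Set (ShiftSpace A)} (hU : IsClopen U) (hV : IsClopen V)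
    {G : Subgroup (ShiftSpace A ≃ₜ ShiftSpace A)}
    (hGU : localGroup A U ≤ G) (hGV : localGroup A V ≤ G)
    {γ : ShiftSpace A ≃ₜ ShiftSpace A}
    (hγfull : γ ∈ fullGroup A) (hγfix : ∀ x ∉ U ∪ V, γ x = x)
    {W₀ : Set (ShiftSpace A)} (hW₀ : IsClopen W₀) (hW₀ne : W₀.Nonempty)
    (hW₀sub : W₀ ⊆ U ∩ V) (hW₀D : ∀ x, x ∈ U ∩ Vᶜ → γ x ∉ W₀) : γ ∈ G := by
  classical
  have hXne : Nonempty (ShiftSpace A) := ⟨hW₀ne.some⟩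
  set C : Set (ShiftSpace A) := U ∩ Vᶜ with hCdef
  have hCclopen : IsClopen C := hU.inter hV.compl
  obtain ⟨mU, hmU⟩ := uniform_cyl hI hU
  obtain ⟨mV, hmV⟩ := uniform_cyl hI hV
  obtain ⟨mC, hmC⟩ := uniform_cyl hI hCclopen
  obtain ⟨n, k, l, hmn, heq, hln, hconst⟩ :=
    normal_form hI hγfull (max (max mU mV) (max mC 1))
  have hln' : ∀ x, l x < n := fun x => by have := hln x; omega
  have hn1 : 1 ≤ n := by
    have := hmn
    have h1 : 1 ≤ max (max mU mV) (max mC 1) :=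
      le_trans (le_max_right mC 1) (le_max_right _ _)
    omega
  have hγUV : ∀ x ∈ U ∪ V, γ x ∈ U ∪ V := mapsinto_of_fix hγfix
  -- the words of level `n` occurring in `C`
  set S : Finset (Fin n → Fin N) :=
    Finset.univ.filter (fun w => ∃ x, x ∈ C ∧ ∀ j : Fin n, x.1 j.1 = w j) with hSdef
  have hrep' : ∀ w : Fin n → Fin N, ∃ x : ShiftSpace A,
      w ∈ S → x ∈ C ∧ ∀ j : Fin n, x.1 j.1 = w j := by
    intro w
    by_cases hw : w ∈ S
    · obtain ⟨x, hx⟩ := (Finset.mem_filter.mp hw).2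
      exact ⟨x, fun _ => hx⟩
    · exact ⟨hXne.some, fun h => absurd h hw⟩
  choose xw hxw using hrep'
  -- disjoint zones inside W₀
  obtain ⟨Z, hZ1, hZ2⟩ := split_clopen_family hI hW₀ hW₀ne S
  -- every point of C lies in the cylinder of its representative
  have hcover : ∀ x ∈ C, (fun j : Fin n => x.1 j.1) ∈ S ∧
      x ∈ Cyl (xw (fun j : Fin n => x.1 j.1)) n := by
    intro x hx
    have hwS : (fun j : Fin n => x.1 j.1) ∈ S :=
      Finset.mem_filter.mpr ⟨Finset.mem_univ _, ⟨x, hx, fun j => rfl⟩⟩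
    refine ⟨hwS, fun j hj => ?_⟩
    rw [(hxw _ hwS).2 ⟨j, hj⟩]
  -- cylinders of distinct words are disjoint
  have hcyl_disj : ∀ w ∈ S, ∀ w' ∈ S, w ≠ w' →
      Cyl (xw w) n ∩ Cyl (xw w') n = ∅ := by
    intro w hw w' hw' hne
    obtain ⟨j, hj⟩ := Function.ne_iff.mp hne
    apply Cyl_disjoint_of_ne j.2
    rw [(hxw w hw).2 j, (hxw w' hw').2 j]
    exact hj
  have hCylC : ∀ w ∈ S, Cyl (xw w) n ⊆ C := by
    intro w hw y hy
    apply hmC (xw w) (hxw w hw).1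
    exact Cyl_mono (le_trans (le_trans (le_max_left mC 1) (le_max_right _ _)) hmn) hy
  have himgW₀ : ∀ w ∈ S, ∀ y ∈ (γ : ShiftSpace A → ShiftSpace A) '' Cyl (xw w) n,
      y ∉ W₀ := by
    rintro w hw y ⟨c, hc, rfl⟩ hyW
    exact hW₀D c (hCylC w hw hc) hyW
  -- main construction for each word
  have main : ∀ w : Fin n → Fin N, w ∈ S → ∃ sg rg : ShiftSpace A ≃ₜ ShiftSpace A,
      sg ∈ G ∧ sg ∈ fullGroup A ∧ rg ∈ G ∧ rg ∈ fullGroup A ∧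
      (∀ x, x ∉ ((γ : ShiftSpace A → ShiftSpace A) '' Cyl (xw w) n) ∪ Z w → sg x = x) ∧
      (∀ x, x ∈ ((γ : ShiftSpace A → ShiftSpace A) '' Cyl (xw w) n) ∪ Z w →
        sg x ∈ ((γ : ShiftSpace A → ShiftSpace A) '' Cyl (xw w) n) ∪ Z w) ∧
      (∀ x, x ∉ Z w ∪ Cyl (xw w) n → rg x = x) ∧
      (∀ x, x ∈ Z w ∪ Cyl (xw w) n → rg x ∈ Z w ∪ Cyl (xw w) n) ∧
      (∀ y ∈ Cyl (xw w) n, sg (γ y) ∈ Z w ∧ rg (sg (γ y)) = y) := by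
    intro w hw
    obtain ⟨hZc, hZne, hZsub⟩ := hZ1 w hw
    set x₀ := xw w with hx₀def
    have hx₀C : x₀ ∈ C := (hxw w hw).1
    set p := k x₀ + (n - l x₀) with hpdef
    have hpm : max (max mU mV) (max mC 1) + 1 ≤ p := by
      have h1 := hln x₀
      omega
    have hp1 : 1 ≤ p := by omega
    have himg : (γ : ShiftSpace A → ShiftSpace A) '' Cyl x₀ n = Cyl (γ x₀) p :=
      image_Cyl hI heq hconst hln' x₀
    obtain ⟨t, q, hq1, htsub, htlast⟩ :=
      exists_target_cyl hA hZc.isOpen hZne (x₀.1 (n - 1))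
    have hlast1 : (γ x₀).1 (p - 1) = t.1 (q - 1) := by
      rw [gamma_last heq hconst hln' x₀, htlast]
    have hDW₀ : ∀ y ∈ Cyl (γ x₀) p, y ∉ W₀ := by
      intro y hy
      rw [← himg] at hy
      exact himgW₀ w hw y hy
    have hdisj1 : Cyl (γ x₀) p ∩ Cyl t q = ∅ := by
      ext y
      simp only [Set.mem_inter_iff, Set.mem_empty_iff_false, iff_false]
      rintro ⟨h1, h2⟩
      exact hDW₀ y h1 (hZsub (htsub h2))
    have hlast2 : t.1 (q - 1) = x₀.1 (n - 1) := htlast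
    have hdisj2 : Cyl t q ∩ Cyl x₀ n = ∅ := by
      ext y
      simp only [Set.mem_inter_iff, Set.mem_empty_iff_false, iff_false]
      rintro ⟨h1, h2⟩
      have hyW : y ∈ W₀ := hZsub (htsub h1)
      have hyC : y ∈ C := hCylC w hw h2
      exact hyC.2 (hW₀sub hyW).2
    set sg := swapHomeo (γ x₀) p t q hp1 hq1 hlast1 hdisj1 with hsgdef
    set rg := swapHomeo t q x₀ n hq1 hn1 hlast2 hdisj2 with hrgdef
    have hsgloc : sg ∈ localGroup A (Cyl (γ x₀) p ∪ Cyl t q) :=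
      swapHomeo_mem_localGroup hp1 hq1 hlast1 hdisj1
    have hrgloc : rg ∈ localGroup A (Cyl t q ∪ Cyl x₀ n) :=
      swapHomeo_mem_localGroup hq1 hn1 hlast2 hdisj2
    have hW₀U : W₀ ⊆ U := fun y hy => (hW₀sub hy).1
    have hW₀V : W₀ ⊆ V := fun y hy => (hW₀sub hy).2
    have htW₀ : Cyl t q ⊆ W₀ := htsub.trans hZsub
    have hsgG : sg ∈ G := by
      have hγx₀UV : γ x₀ ∈ U ∪ V := hγUV x₀ (Or.inl hx₀C.1)
      rcases hγx₀UV with h | h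
      · apply hGU
        apply localGroup_mono _ hsgloc
        apply Set.union_subset
        · exact fun y hy => hmU _ h (Cyl_mono (by omega) hy)
        · exact htW₀.trans hW₀U
      · apply hGV
        apply localGroup_mono _ hsgloc
        apply Set.union_subset
        · exact fun y hy => hmV _ h (Cyl_mono (by omega) hy)
        · exact htW₀.trans hW₀V
    have hrgG : rg ∈ G := by
      apply hGU
      apply localGroup_mono _ hrgloc
      apply Set.union_subset
      · exact htW₀.trans hW₀U
      · exact fun y hy => (hCylC w hw hy).1
    refine ⟨sg, rg, hsgG, hsgloc.1, hrgG, hrgloc.1, ?_, ?_, ?_, ?_, ?_⟩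
    · intro x hx
      rw [himg] at hx
      have hx1 : x ∉ Cyl (γ x₀) p := fun h => hx (Or.inl h)
      have hx2 : x ∉ Z w := fun h => hx (Or.inr h)
      exact swapFun_of_not_mem hx1 (fun h => hx2 (htsub h))
    · intro x hx
      rw [himg] at hx ⊢
      by_cases h1 : x ∈ Cyl (γ x₀) p ∪ Cyl t q
      · rcases swapFun_mapsTo hp1 hq1 hlast1 h1 with h | h
        · exact Or.inl h
        · exact Or.inr (htsub h)
      · have h11 : x ∉ Cyl (γ x₀) p := fun h => h1 (Or.inl h)
        have h12 : x ∉ Cyl t q := fun h => h1 (Or.inr h)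
        show swapFun (γ x₀) p t q x ∈ _
        rw [swapFun_of_not_mem h11 h12]
        exact hx
    · intro x hx
      have hx1 : x ∉ Z w := fun h => hx (Or.inl h)
      have hx2 : x ∉ Cyl x₀ n := fun h => hx (Or.inr h)
      exact swapFun_of_not_mem (fun h => hx1 (htsub h)) hx2
    · intro x hx
      by_cases h1 : x ∈ Cyl t q ∪ Cyl x₀ n
      · rcases swapFun_mapsTo hq1 hn1 hlast2 h1 with h | h
        · exact Or.inl (htsub h)
        · exact Or.inr h
      · have h11 : x ∉ Cyl t q := fun h => h1 (Or.inl h)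
        have h12 : x ∉ Cyl x₀ n := fun h => h1 (Or.inr h)
        show swapFun t q x₀ n x ∈ _
        rw [swapFun_of_not_mem h11 h12]
        exact hx
    · intro y hy
      have hy1 : γ y ∈ Cyl (γ x₀) p := by
        rw [← himg]
        exact ⟨y, hy, rfl⟩
      have hA1 : A (t.1 (q - 1)) ((γ y).1 p) = true := compat_left hp1 hlast1 hy1
      have hsy : sg (γ y) = glue t q (γ y) p :=
        swapFun_of_mem_left hy1 (disj_not_mem hdisj1 hy1)
      have hu : glue t q (γ y) p ∈ Cyl t q := glue_mem_Cyl hq1 hA1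
      constructor
      · rw [hsy]
        exact htsub hu
      · rw [hsy]
        have hru : rg (glue t q (γ y) p) = glue x₀ n (glue t q (γ y) p) q :=
          swapFun_of_mem_left hu (disj_not_mem hdisj2 hu)
        rw [hru]
        have hA2 : A (x₀.1 (n - 1)) ((glue t q (γ y) p).1 q) = true :=
          compat_left hq1 hlast2 hu
        apply Subtype.ext
        funext j
        rw [glue_coord hn1 hA2]
        by_cases hjn : j < n
        · rw [if_pos hjn]
          exact (hy j hjn).symm
        · rw [if_neg hjn, glue_coord hq1 hA1, if_neg (by omega : ¬ j - n + q < q)]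
          have harr : j - n + q - q + p = j - n + p := by omega
          rw [harr]
          have h3 := gamma_coord heq hconst hy (j - n + p)
          have hlnx := hln' x₀
          rw [if_neg (by omega : ¬ j - n + p < k x₀)] at h3
          rw [h3]
          have harr2 : j - n + p - k x₀ + l x₀ = j := by omega
          rw [harr2]
  -- choose the swaps
  choose sg rg hsgG hsgfull hrgG hrgfull hsfix hsmaps hrfix hrmaps haction using main
  set DS : (Fin n → Fin N) → Set (ShiftSpace A) :=
    fun w => ((γ : ShiftSpace A → ShiftSpace A) '' Cyl (xw w) n) ∪ Z w with hDSdef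
  set RS : (Fin n → Fin N) → Set (ShiftSpace A) :=
    fun w => Z w ∪ Cyl (xw w) n with hRSdef
  have hZW₀ : ∀ w ∈ S, Z w ⊆ W₀ := fun w hw => (hZ1 w hw).2.2
  have hCW₀ : ∀ y ∈ C, y ∉ W₀ := fun y hy hyW => hy.2 (hW₀sub hyW).2
  have hDdisj : ∀ w ∈ S, ∀ w' ∈ S, w ≠ w' → DS w ∩ DS w' = ∅ := by
    intro w hw w' hw' hne
    ext y
    simp only [Set.mem_inter_iff, Set.mem_empty_iff_false, iff_false]
    rintro ⟨hy1 | hy1, hy2 | hy2⟩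
    · obtain ⟨c, hc, rfl⟩ := hy1
      obtain ⟨c', hc', hcc⟩ := hy2
      have : c' = c := γ.injective hcc
      subst this
      have : c' ∈ Cyl (xw w) n ∩ Cyl (xw w') n := ⟨hc, hc'⟩
      rw [hcyl_disj w hw w' hw' hne] at this
      exact this
    · exact himgW₀ w hw y hy1 (hZW₀ w' hw' hy2)
    · exact himgW₀ w' hw' y hy2 (hZW₀ w hw hy1)
    · have : y ∈ Z w ∩ Z w' := ⟨hy1, hy2⟩
      rw [hZ2 w hw w' hw' hne] at this
      exact this
  have hRdisj : ∀ w ∈ S, ∀ w' ∈ S, w ≠ w' → RS w ∩ RS w' = ∅ := by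
    intro w hw w' hw' hne
    ext y
    simp only [Set.mem_inter_iff, Set.mem_empty_iff_false, iff_false]
    rintro ⟨hy1 | hy1, hy2 | hy2⟩
    · have : y ∈ Z w ∩ Z w' := ⟨hy1, hy2⟩
      rw [hZ2 w hw w' hw' hne] at this
      exact this
    · exact hCW₀ y (hCylC w' hw' hy2) (hZW₀ w hw hy1)
    · exact hCW₀ y (hCylC w hw hy1) (hZW₀ w' hw' hy2)
    · have : y ∈ Cyl (xw w) n ∩ Cyl (xw w') n := ⟨hy1, hy2⟩
      rw [hcyl_disj w hw w' hw' hne] at this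
      exact this
  have hcomm1 : (↑S.attach : Set {w // w ∈ S}).Pairwise
      (Function.onFun Commute (fun ws : {w // w ∈ S} => sg ws.1 ws.2)) := by
    intro ws _ ws' _ hne
    exact commute_of_disjoint (hsfix ws.1 ws.2) (hsmaps ws.1 ws.2)
      (hsfix ws'.1 ws'.2) (hsmaps ws'.1 ws'.2)
      (hDdisj ws.1 ws.2 ws'.1 ws'.2 (fun h => hne (Subtype.ext h)))
  have hcomm2 : (↑S.attach : Set {w // w ∈ S}).Pairwise
      (Function.onFun Commute (fun ws : {w // w ∈ S} => rg ws.1 ws.2)) := by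
    intro ws _ ws' _ hne
    exact commute_of_disjoint (hrfix ws.1 ws.2) (hrmaps ws.1 ws.2)
      (hrfix ws'.1 ws'.2) (hrmaps ws'.1 ws'.2)
      (hRdisj ws.1 ws.2 ws'.1 ws'.2 (fun h => hne (Subtype.ext h)))
  set sP := S.attach.noncommProd (fun ws : {w // w ∈ S} => sg ws.1 ws.2) hcomm1 with hsPdef
  set rP := S.attach.noncommProd (fun ws : {w // w ∈ S} => rg ws.1 ws.2) hcomm2 with hrPdef
  have hsPG : sP ∈ G := noncommProd_mem_subgroup _ _ _ (fun ws _ => hsgG ws.1 ws.2)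
  have hrPG : rP ∈ G := noncommProd_mem_subgroup _ _ _ (fun ws _ => hrgG ws.1 ws.2)
  have hsPfull : sP ∈ fullGroup A :=
    noncommProd_mem_subgroup _ _ _ (fun ws _ => hsgfull ws.1 ws.2)
  have hrPfull : rP ∈ fullGroup A :=
    noncommProd_mem_subgroup _ _ _ (fun ws _ => hrgfull ws.1 ws.2)
  have hβγ : ∀ x ∈ C, rP (sP (γ x)) = x := by
    intro x hx
    obtain ⟨hwS, hxcyl⟩ := hcover x hx
    set w : Fin n → Fin N := fun j : Fin n => x.1 j.1 with hwdef
    obtain ⟨hsZ, hrs⟩ := haction w hwS x hxcyl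
    have hγxD : γ x ∈ DS w := Or.inl ⟨x, hxcyl, rfl⟩
    have huD : sg w hwS (γ x) ∈ DS w := Or.inr hsZ
    have huR : sg w hwS (γ x) ∈ RS w := Or.inl hsZ
    have hxR : x ∈ RS w := Or.inr hxcyl
    have h1 : sP (γ x) = sg w hwS (γ x) := by
      apply noncommProd_apply_single S.attach _ hcomm1
        (Finset.mem_attach S ⟨w, hwS⟩) rfl
      intro ws' _ hne
      have hne' : ws'.1 ≠ w := fun h => hne (Subtype.ext h)
      have hd := hDdisj ws'.1 ws'.2 w hwS hne'
      constructor
      · apply hsfix ws'.1 ws'.2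
        intro hmem
        have : γ x ∈ DS ws'.1 ∩ DS w := ⟨hmem, hγxD⟩
        rw [hd] at this
        exact this
      · apply hsfix ws'.1 ws'.2
        intro hmem
        have : sg w hwS (γ x) ∈ DS ws'.1 ∩ DS w := ⟨hmem, huD⟩
        rw [hd] at this
        exact this
    rw [h1]
    apply noncommProd_apply_single S.attach _ hcomm2
      (Finset.mem_attach S ⟨w, hwS⟩) hrs
    intro ws' _ hne
    have hne' : ws'.1 ≠ w := fun h => hne (Subtype.ext h)
    have hd := hRdisj ws'.1 ws'.2 w hwS hne'
    constructor
    · apply hrfix ws'.1 ws'.2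
      intro hmem
      have : sg w hwS (γ x) ∈ RS ws'.1 ∩ RS w := ⟨hmem, huR⟩
      rw [hd] at this
      exact this
    · apply hrfix ws'.1 ws'.2
      intro hmem
      have : x ∈ RS ws'.1 ∩ RS w := ⟨hmem, hxR⟩
      rw [hd] at this
      exact this
  have hβfix : ∀ x, x ∉ U ∪ V → rP (sP x) = x := by
    intro x hx
    have hs1 : sP x = x := by
      apply noncommProd_apply_fix
      intro ws _
      apply hsfix ws.1 ws.2
      rintro (⟨c, hc, rfl⟩ | hmem)
      · exact hx (hγUV c (Or.inl (hCylC ws.1 ws.2 hc).1))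
      · exact hx (Or.inl (hW₀sub (hZW₀ ws.1 ws.2 hmem)).1)
    rw [hs1]
    apply noncommProd_apply_fix
    intro ws _
    apply hrfix ws.1 ws.2
    rintro (hmem | hmem)
    · exact hx (Or.inl (hW₀sub (hZW₀ ws.1 ws.2 hmem)).1)
    · exact hx (Or.inl (hCylC ws.1 ws.2 hmem).1)
  have hτ : rP * sP * γ ∈ localGroup A V := by
    refine ⟨mul_mem (mul_mem hrPfull hsPfull) hγfull, fun x hx => ?_⟩
    show rP (sP (γ x)) = x
    by_cases hxU : x ∈ U
    · exact hβγ x ⟨hxU, hx⟩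
    · have hxUV : x ∉ U ∪ V := fun h => h.elim hxU hx
      rw [hγfix x hxUV]
      exact hβfix x hxUV
  have hfinal : γ = (rP * sP)⁻¹ * (rP * sP * γ) := by group
  rw [hfinal]
  exact mul_mem (inv_mem (mul_mem hrPG hsPG)) (hGV hτ)

end Development9
section Development10

variable {N : ℕ} {A : Fin N → Fin N → Bool}

lemma localGroup_union_le (hA : MatrixIrreducible A) (hI : ConditionI A)
    {U V : Set (ShiftSpace A)} (hU : IsClopen U) (hV : IsClopen V)
    (hW : (U ∩ V).Nonempty) {G : Subgroup (ShiftSpace A ≃ₜ ShiftSpace A)}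
    (hGU : localGroup A U ≤ G) (hGV : localGroup A V ≤ G) :
    localGroup A (U ∪ V) ≤ G := by
  intro γ hγ
  obtain ⟨hγfull, hγfix⟩ := hγ
  set R : Set (ShiftSpace A) := (γ : ShiftSpace A → ShiftSpace A) '' V with hRdef
  have hRclopen : IsClopen R := homeo_image_clopen γ hV
  have hRne : R.Nonempty := ⟨γ hW.some, hW.some, hW.some_mem.2, rfl⟩
  have hγUV : ∀ x ∈ U ∪ V, γ x ∈ U ∪ V := mapsinto_of_fix hγfix
  have hRD : ∀ x, x ∈ U ∩ Vᶜ → γ x ∉ R := by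
    rintro x hx ⟨v, hv, hvv⟩
    have hveq : v = x := γ.injective hvv
    subst hveq
    exact hx.2 hv
  have hRUV : R ⊆ U ∪ V := by
    rintro - ⟨v, hv, rfl⟩
    exact hγUV v (Or.inr hv)
  -- the mobility step: an element of `G` moving a zone of `U ∩ V` away from `R`
  have side : ∀ P : Set (ShiftSpace A), IsClopen P → localGroup A P ≤ G →
      U ∩ V ⊆ P → P ⊆ U ∪ V → ∀ R' : Set (ShiftSpace A), IsClopen R' → R'.Nonempty →
      R' ⊆ P → R' ⊆ R → R' ∩ (U ∩ V) = ∅ →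
      ∃ (g : ShiftSpace A ≃ₜ ShiftSpace A) (W₀ : Set (ShiftSpace A)),
        g ∈ G ∧ g ∈ fullGroup A ∧ (∀ x, x ∉ U ∪ V → g x = x) ∧ IsClopen W₀ ∧
        W₀.Nonempty ∧ W₀ ⊆ U ∩ V ∧ ∀ y, y ∉ R → g y ∉ W₀ := by
    intro P hPclopen hGP hUVP hPUV R' hR'clopen hR'ne hR'P hR'R hR'W
    obtain ⟨z, hz⟩ := hR'ne
    obtain ⟨a₀, ha₀⟩ := exists_Cyl_subset hR'clopen.isOpen hz
    set a := max a₀ 1 with hadef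
    have ha1 : 1 ≤ a := le_max_right a₀ 1
    have hCylR' : Cyl z a ⊆ R' := fun y hy => ha₀ (Cyl_mono (le_max_left a₀ 1) hy)
    obtain ⟨t, q, hq1, htsub, htlast⟩ :=
      exists_target_cyl hA (hU.inter hV).isOpen hW (z.1 (a - 1))
    have hlast : z.1 (a - 1) = t.1 (q - 1) := htlast.symm
    have hdisj : Cyl z a ∩ Cyl t q = ∅ := by
      ext y
      simp only [Set.mem_inter_iff, Set.mem_empty_iff_false, iff_false]
      rintro ⟨h1, h2⟩
      have : y ∈ R' ∩ (U ∩ V) := ⟨hCylR' h1, htsub h2⟩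
      rw [hR'W] at this
      exact this
    set g := swapHomeo z a t q ha1 hq1 hlast hdisj with hgdef
    have hgloc : g ∈ localGroup A (Cyl z a ∪ Cyl t q) :=
      swapHomeo_mem_localGroup ha1 hq1 hlast hdisj
    refine ⟨g, Cyl t q, ?_, hgloc.1, ?_, isClopen_Cyl t q, ⟨t, self_mem_Cyl t q⟩,
      htsub, ?_⟩
    · apply hGP
      apply localGroup_mono _ hgloc
      exact Set.union_subset (hCylR'.trans hR'P) (htsub.trans hUVP)
    · intro x hx
      apply hgloc.2
      rintro (h | h)
      · exact hx (hPUV (hR'P (hCylR' h)))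
      · exact hx (Or.inl (htsub h).1)
    · intro y hy
      by_cases h1 : y ∈ Cyl z a
      · exact absurd (hR'R (hCylR' h1)) hy
      · by_cases h2 : y ∈ Cyl t q
        · rw [show g y = swapFun z a t q y from rfl, swapFun_of_mem_right h1 h2]
          exact disj_not_mem hdisj
            (glue_mem_Cyl ha1 (compat_right hq1 hlast h2))
        · rw [show g y = swapFun z a t q y from rfl, swapFun_of_not_mem h1 h2]
          exact h2
  have key : ∃ (g : ShiftSpace A ≃ₜ ShiftSpace A) (W₀ : Set (ShiftSpace A)),
      g ∈ G ∧ g ∈ fullGroup A ∧ (∀ x, x ∉ U ∪ V → g x = x) ∧ IsClopen W₀ ∧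
      W₀.Nonempty ∧ W₀ ⊆ U ∩ V ∧ ∀ y, y ∉ R → g y ∉ W₀ := by
    by_cases hRW : (R ∩ (U ∩ V)).Nonempty
    · refine ⟨1, R ∩ (U ∩ V), one_mem G, one_mem (fullGroup A), fun x _ => rfl,
        hRclopen.inter (hU.inter hV), hRW, Set.inter_subset_right, fun y hy hmem => ?_⟩
      exact hy hmem.1
    · have hRW' : R ∩ (U ∩ V) = ∅ := Set.not_nonempty_iff_eq_empty.mp hRW
      by_cases hRU : (R ∩ U).Nonempty
      · refine side U hU hGU Set.inter_subset_left Set.subset_union_left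
          (R ∩ U) (hRclopen.inter hU) hRU Set.inter_subset_right
          Set.inter_subset_left ?_
        apply Set.eq_empty_of_subset_empty
        rw [← hRW']
        exact fun y hy => ⟨hy.1.1, hy.2⟩
      · have hRV : R ⊆ V := by
          intro y hyR
          rcases hRUV hyR with h | h
          · exact absurd (Set.nonempty_of_mem (show y ∈ R ∩ U from ⟨hyR, h⟩)) hRU
          · exact h
        refine side V hV hGV Set.inter_subset_right Set.subset_union_right
          R hRclopen hRne hRV (fun y hy => hy) hRW'
  obtain ⟨g, W₀, hgG, hgfull, hgfix, hW₀clopen, hW₀ne, hW₀sub, hgR⟩ := key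
  have hγ'full : g * γ ∈ fullGroup A := mul_mem hgfull hγfull
  have hγ'fix : ∀ x, x ∉ U ∪ V → (g * γ) x = x := by
    intro x hx
    show g (γ x) = x
    rw [hγfix x hx, hgfix x hx]
  have hγ'W₀ : ∀ x, x ∈ U ∩ Vᶜ → (g * γ) x ∉ W₀ := by
    intro x hx
    exact hgR (γ x) (hRD x hx)
  have hγ'G : g * γ ∈ G :=
    frag_aux hA hI hU hV hGU hGV hγ'full hγ'fix hW₀clopen hW₀ne hW₀sub hγ'W₀
  have hfin : γ = g⁻¹ * (g * γ) := by group
  rw [hfin]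
  exact mul_mem (inv_mem hgG) hγ'G

end Development10
theorem stmt12 {N : ℕ} (hN : 1 < N) (A : Fin N → Fin N → Bool)
    (hA : MatrixIrreducible A) (hI : ConditionI A)
    (O : Set (ShiftSpace A)) (hO : IsClopen O)
    (η : ShiftSpace A ≃ₜ ShiftSpace A) (hη : η ∈ fullGroup A)
    (h1 : ((η '' O) ∩ Oᶜ).Nonempty) (h2 : ((η '' Oᶜ) ∩ Oᶜ).Nonempty) :
    Subgroup.closure (↑(localGroup A O) ∪ ↑(localGroup A Oᶜ) ∪ {η}) = fullGroup A := by
  set G := Subgroup.closure (↑(localGroup A O) ∪ ↑(localGroup A Oᶜ) ∪ {η}) with hGdef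
  apply le_antisymm
  · rw [hGdef]
    apply (Subgroup.closure_le (fullGroup A)).mpr
    rintro θ ((hθ | hθ) | hθ)
    · exact hθ.1
    · exact hθ.1
    · rw [Set.mem_singleton_iff] at hθ
      subst hθ
      exact hη
  · have hηG : η ∈ G := Subgroup.subset_closure (Or.inr rfl)
    have hGO : localGroup A O ≤ G := fun θ hθ =>
      Subgroup.subset_closure (Or.inl (Or.inl hθ))
    have hGOc : localGroup A Oᶜ ≤ G := fun θ hθ =>
      Subgroup.subset_closure (Or.inl (Or.inr hθ))
    have hGηO : localGroup A ((η : ShiftSpace A → ShiftSpace A) '' O) ≤ G :=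
      localGroup_image_le hη hGO hηG
    have hGηOc : localGroup A ((η : ShiftSpace A → ShiftSpace A) '' Oᶜ) ≤ G :=
      localGroup_image_le hη hGOc hηG
    have hstep1 : localGroup A (((η : ShiftSpace A → ShiftSpace A) '' O) ∪ Oᶜ) ≤ G :=
      localGroup_union_le hA hI (homeo_image_clopen η hO) hO.compl h1 hGηO hGOc
    have hstep2 : localGroup A ((((η : ShiftSpace A → ShiftSpace A) '' O) ∪ Oᶜ) ∪
        ((η : ShiftSpace A → ShiftSpace A) '' Oᶜ)) ≤ G := by
      apply localGroup_union_le hA hI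
        ((homeo_image_clopen η hO).union hO.compl) (homeo_image_clopen η hO.compl)
        ?_ hstep1 hGηOc
      obtain ⟨x, hx1, hx2⟩ := h2
      exact ⟨x, Or.inr hx2, hx1⟩
    have huniv : (((η : ShiftSpace A → ShiftSpace A) '' O) ∪ Oᶜ) ∪
        ((η : ShiftSpace A → ShiftSpace A) '' Oᶜ) = Set.univ := by
      apply Set.eq_univ_of_forall
      intro x
      by_cases h : η.symm x ∈ O
      · exact Or.inl (Or.inl ⟨η.symm x, h, η.apply_symm_apply x⟩)
      · exact Or.inr ⟨η.symm x, h, η.apply_symm_apply x⟩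
    intro γ hγ
    apply hstep2
    rw [huniv]
    exact mem_localGroup_univ hγ
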